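/- Let ρ > 0, p₁ = (x₁, y₁) ∈ ℝ² with d₁₂ := ‖p₁‖ ≥ 2ρ, and d₂₃ ≥ 2ρ with p₃ = (d₂₃, 0). Define the SR arrival-path length D₁(θ) = ρ(φ₁(θ) − θ − π) + L₁(θ) with L₁(θ) = √(d₁₂² − 2ρ(x₁ sin θ − y₁ cos θ)) and φ₁(θ) = atan2(y₁ + ρ cos θ, x₁ − ρ sin θ) + arctan(ρ / L₁(θ)), and the RS departure-path length D₂(θ) = ρ(θ − φ₂(θ)) + L₂(θ) with L₂(θ) = √(d₂₃² − 2 d₂₃ ρ sin θ) and φ₂(θ) = atan2(ρ cos θ, d₂₃ − ρ sin θ) − arctan(ρ / L₂(θ)). Set τ₁(θ) = φ₁(θ) − θ − π and τ₂(θ) = θ − φ₂(θ). Then on any open interval where L₁ > 0, L₂ > 0, τ₁(θ) ∈ (0, 2π) and τ₂(θ) ∈ (0, 2π), the total length G(θ) = D₁(θ) + D₂(θ) is differentiable with G′(θ) = ρ(cos τ₁(θ) − cos τ₂(θ)); if moreover θ is a point of this interval with G′(θ) = 0 and τ₁(θ) + τ₂(θ) ≠ 2π, then τ₁(θ) = τ₂(θ),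 i.e., the angle of turn in the curved segment from p₁ to the origin equals the angle of turn in the curved segment from the origin to p₃. -/

import Mathlib

/-- Four-quadrant arctangent: `atan2 y x` is the argument of the complex number `x + y i`. -/
noncomputable def atan2 (y x : ℝ) : ℝ := Complex.arg ⟨x, y⟩

/-- Tangent-segment length of the SR Dubins path from `p₁ = (x₁, y₁)` to the origin
arriving with heading `θ`: `L₁(θ) = √(d₁₂² − 2ρ(x₁ sin θ − y₁ cos θ))`. -/
noncomputable def Lsr (ρ x₁ y₁ θ : ℝ) : ℝ :=
  Real.sqrt (Real.sqrt (x₁ ^ 2 + y₁ ^ 2) ^ 2 - 2 * ρ * (x₁ * Real.sin θ - y₁ * Real.cos θ))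

/-- Heading along the straight segment of the SR path (reversed LS path):
`φ₁(θ) = atan2(y₁ + ρ cos θ, x₁ − ρ sin θ) + arctan(ρ / L₁(θ))`. -/
noncomputable def φsr (ρ x₁ y₁ θ : ℝ) : ℝ :=
  atan2 (y₁ + ρ * Real.cos θ) (x₁ - ρ * Real.sin θ) + Real.arctan (ρ / Lsr ρ x₁ y₁ θ)

/-- SR arrival-path length `D₁(θ) = ρ(φ₁(θ) − θ − π) + L₁(θ)`. -/
noncomputable def Dsr (ρ x₁ y₁ θ : ℝ) : ℝ :=
  ρ * (φsr ρ x₁ y₁ θ - θ - Real.pi) + Lsr ρ x₁ y₁ θ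

/-- Tangent-segment length of the RS Dubins path from the origin with heading `θ`
to `p₃ = (d₂₃, 0)`: `L₂(θ) = √(d₂₃² − 2 d₂₃ ρ sin θ)`. -/
noncomputable def Lrs (ρ d₂₃ θ : ℝ) : ℝ :=
  Real.sqrt (d₂₃ ^ 2 - 2 * d₂₃ * ρ * Real.sin θ)

/-- Heading along the straight segment of the RS departure path:
`φ₂(θ) = atan2(ρ cos θ, d₂₃ − ρ sin θ) − arctan(ρ / L₂(θ))`. -/
noncomputable def φrs (ρ d₂₃ θ : ℝ) : ℝ :=
  atan2 (ρ * Real.cos θ) (d₂₃ - ρ * Real.sin θ) - Real.arctan (ρ / Lrs ρ d₂₃ θ)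

/-- RS departure-path length `D₂(θ) = ρ(θ − φ₂(θ)) + L₂(θ)`. -/
noncomputable def Drs (ρ d₂₃ θ : ℝ) : ℝ :=
  ρ * (θ - φrs ρ d₂₃ θ) + Lrs ρ d₂₃ θ

/-- Total SRS path length from `p₁` through the origin to `p₃` as a function of the
heading `θ` at the middle point: `G(θ) = D₁(θ) + D₂(θ)`. -/
noncomputable def Gsrs (ρ x₁ y₁ d₂₃ θ : ℝ) : ℝ :=
  Dsr ρ x₁ y₁ θ + Drs ρ d₂₃ θ

open Real Filter Topology

lemma atan2_of_pos_x {y x : ℝ} (hx : 0 < x) : atan2 y x = Real.arctan (y / x) := by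
  have h : |Complex.arg ⟨x, y⟩| < π / 2 :=
    Complex.abs_arg_lt_pi_div_two_iff.2 (Or.inl hx)
  rw [abs_lt] at h
  have ht : Real.tan (Complex.arg ⟨x, y⟩) = y / x := Complex.tan_arg ⟨x, y⟩
  rw [atan2, ← ht, Real.arctan_tan h.1 h.2]

lemma atan2_of_pos_y {y x : ℝ} (hy : 0 < y) : atan2 y x = π / 2 - Real.arctan (x / y) := by
  have h1 : 0 < Complex.arg ⟨x, y⟩ := by
    rcases lt_or_eq_of_le (Complex.arg_nonneg_iff.2 (le_of_lt hy : (0:ℝ) ≤ (⟨x,y⟩:ℂ).im)) with h | h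
    · exact h
    · exact absurd (Complex.arg_eq_zero_iff.1 h.symm).2 hy.ne'
  have h2 : Complex.arg ⟨x, y⟩ < π := by
    rcases lt_or_eq_of_le (Complex.arg_le_pi ⟨x, y⟩) with h | h
    · exact h
    · exact absurd (Complex.arg_eq_pi_iff.1 h).2 hy.ne'
  have hmem1 : -(π/2) < π/2 - Complex.arg ⟨x, y⟩ := by linarith
  have hmem2 : π/2 - Complex.arg ⟨x, y⟩ < π/2 := by linarith
  have ht : Real.tan (π/2 - Complex.arg ⟨x, y⟩) = x / y := by
    rw [Real.tan_pi_div_two_sub, Complex.tan_arg, inv_div]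
  rw [atan2, ← ht, Real.arctan_tan hmem1 hmem2]; ring

lemma atan2_of_neg_y {y x : ℝ} (hy : y < 0) : atan2 y x = -(π / 2) - Real.arctan (x / y) := by
  have h1 : Complex.arg ⟨x, y⟩ < 0 := Complex.arg_neg_iff.2 hy
  have h2 : -π < Complex.arg ⟨x, y⟩ := Complex.neg_pi_lt_arg ⟨x, y⟩
  have hmem1 : -(π/2) < -(π/2) - Complex.arg ⟨x, y⟩ := by linarith
  have hmem2 : -(π/2) - Complex.arg ⟨x, y⟩ < π/2 := by linarith
  have ht : Real.tan (-(π/2) - Complex.arg ⟨x, y⟩) = x / y := by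
    have : -(π/2) - Complex.arg ⟨x, y⟩ = π/2 - Complex.arg ⟨x, y⟩ - π := by ring
    rw [this, Real.tan_periodic.sub_eq, Real.tan_pi_div_two_sub, Complex.tan_arg, inv_div]
  rw [atan2, ← ht, Real.arctan_tan hmem1 hmem2]; ring

lemma atan2_of_neg_x_nonneg_y {y x : ℝ} (hx : x < 0) (hy : 0 ≤ y) :
    atan2 y x = Real.arctan (y / x) + π := by
  have h1 : π/2 < Complex.arg ⟨x, y⟩ := by
    by_contra h
    push_neg at h
    rcases Complex.arg_le_pi_div_two_iff.1 h with h' | h'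
    · exact absurd h' (by simpa using hx.not_ge)
    · exact absurd hy (by simpa using h'.not_ge)
  have h2 : Complex.arg ⟨x, y⟩ ≤ π := Complex.arg_le_pi _
  have hmem1 : -(π/2) < Complex.arg ⟨x, y⟩ - π := by linarith
  have hmem2 : Complex.arg ⟨x, y⟩ - π < π/2 := by linarith
  have ht : Real.tan (Complex.arg ⟨x, y⟩ - π) = y / x := by
    rw [Real.tan_periodic.sub_eq, Complex.tan_arg]
  rw [atan2, ← ht, Real.arctan_tan hmem1 hmem2]; ring

lemma hasDerivAt_atan2 {x y : ℝ → ℝ} {x' y' θ : ℝ}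
    (hx : HasDerivAt x x' θ) (hy : HasDerivAt y y' θ)
    (h : 0 < x θ ∨ y θ ≠ 0 ∨ (x θ < 0 ∧ ∀ᶠ t in 𝓝 θ, 0 ≤ y t)) :
    HasDerivAt (fun t => atan2 (y t) (x t))
      ((x θ * y' - y θ * x') / (x θ ^ 2 + y θ ^ 2)) θ := by
  rcases h with hx0 | hy0 | ⟨hx0, hev⟩
  · -- 0 < x θ
    have hev : ∀ᶠ t in 𝓝 θ, 0 < x t :=
      hx.continuousAt.preimage_mem_nhds (Ioi_mem_nhds hx0)
    have hder : HasDerivAt (fun t => Real.arctan (y t / x t))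
        (1 / (1 + (y θ / x θ) ^ 2) * ((y' * x θ - y θ * x') / x θ ^ 2)) θ :=
      (hy.div hx hx0.ne').arctan
    refine (hder.congr_of_eventuallyEq ?_).congr_deriv ?_
    · filter_upwards [hev] with t ht
      rw [atan2_of_pos_x ht]
    · field_simp
  · -- y θ ≠ 0
    rcases hy0.lt_or_gt with hy0 | hy0
    · have hev : ∀ᶠ t in 𝓝 θ, y t < 0 :=
        hy.continuousAt.preimage_mem_nhds (Iio_mem_nhds hy0)
      have hder : HasDerivAt (fun t => -(π/2) - Real.arctan (x t / y t))
          (-(1 / (1 + (x θ / y θ) ^ 2) * ((x' * y θ - x θ * y') / y θ ^ 2))) θ :=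
        ((hx.div hy hy0.ne).arctan).const_sub _
      refine (hder.congr_of_eventuallyEq ?_).congr_deriv ?_
      · filter_upwards [hev] with t ht
        rw [atan2_of_neg_y ht]
      · field_simp
        ring
    · have hev : ∀ᶠ t in 𝓝 θ, 0 < y t :=
        hy.continuousAt.preimage_mem_nhds (Ioi_mem_nhds hy0)
      have hder : HasDerivAt (fun t => π/2 - Real.arctan (x t / y t))
          (-(1 / (1 + (x θ / y θ) ^ 2) * ((x' * y θ - x θ * y') / y θ ^ 2))) θ :=
        ((hx.div hy hy0.ne').arctan).const_sub _
      refine (hder.congr_of_eventuallyEq ?_).congr_deriv ?_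
      · filter_upwards [hev] with t ht
        rw [atan2_of_pos_y ht]
      · field_simp
        ring
  · -- x θ < 0 and eventually 0 ≤ y
    have hevx : ∀ᶠ t in 𝓝 θ, x t < 0 :=
      hx.continuousAt.preimage_mem_nhds (Iio_mem_nhds hx0)
    have hder : HasDerivAt (fun t => Real.arctan (y t / x t) + π)
        (1 / (1 + (y θ / x θ) ^ 2) * ((y' * x θ - y θ * x') / x θ ^ 2)) θ :=
      ((hy.div hx hx0.ne).arctan).add_const _
    refine (hder.congr_of_eventuallyEq ?_).congr_deriv ?_
    · filter_upwards [hevx, hev] with t htx hty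
      rw [atan2_of_neg_x_nonneg_y htx hty]
    · have hne : x θ ^ 2 + y θ ^ 2 ≠ 0 := by nlinarith [sq_nonneg (y θ), sq_nonneg (x θ)]
      field_simp [hx0.ne]

lemma cos_tau {X Y L ρ : ℝ} (θ : ℝ) (hr : 0 < X^2 + Y^2) (hL : 0 < L)
    (hXY : X^2 + Y^2 = L^2 + ρ^2) :
    Real.cos (atan2 Y X + Real.arctan (ρ / L) - θ - π)
      = -((X * Real.cos θ + Y * Real.sin θ) * L - (Y * Real.cos θ - X * Real.sin θ) * ρ)
          / (X^2 + Y^2) := by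
  have hrpos : 0 < Real.sqrt (X^2+Y^2) := Real.sqrt_pos.2 hr
  have hz : (⟨X, Y⟩ : ℂ) ≠ 0 := by
    intro h
    rw [Complex.ext_iff] at h
    simp only [Complex.zero_re, Complex.zero_im] at h
    nlinarith [h.1, h.2]
  have habs : ‖(⟨X, Y⟩ : ℂ)‖ = Real.sqrt (X^2+Y^2) := by
    rw [Complex.norm_def, Complex.normSq_mk]
    ring_nf
  have hcosA : Real.cos (atan2 Y X) = X / Real.sqrt (X^2+Y^2) := by
    rw [atan2, Complex.cos_arg hz, habs]
  have hsinA : Real.sin (atan2 Y X) = Y / Real.sqrt (X^2+Y^2) := by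
    rw [atan2, Complex.sin_arg, habs]
  have h1u : Real.sqrt (1 + (ρ/L)^2) = Real.sqrt (X^2+Y^2) / L := by
    have he : 1 + (ρ/L)^2 = (X^2+Y^2) / L^2 := by
      rw [hXY]; field_simp
    rw [he, Real.sqrt_div (by positivity), Real.sqrt_sq hL.le]
  have hcosu : Real.cos (Real.arctan (ρ/L)) = L / Real.sqrt (X^2+Y^2) := by
    rw [Real.cos_arctan, h1u, one_div_div]
  have hsinu : Real.sin (Real.arctan (ρ/L)) = ρ / Real.sqrt (X^2+Y^2) := by
    rw [Real.sin_arctan, h1u]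
    rw [div_div_div_cancel_right₀ hL.ne']
  rw [show atan2 Y X + Real.arctan (ρ/L) - θ - π = ((atan2 Y X - θ) + Real.arctan (ρ/L)) - π by ring]
  rw [Real.cos_sub_pi, Real.cos_add, Real.cos_sub, Real.sin_sub, hcosA, hsinA, hcosu, hsinu]
  have hs2 : Real.sqrt (X^2+Y^2) * Real.sqrt (X^2+Y^2) = X^2+Y^2 := Real.mul_self_sqrt hr.le
  field_simp
  rw [Real.sq_sqrt hr.le]

lemma hasDerivAt_Dsr {ρ x₁ y₁ θ : ℝ} (hρ : 0 < ρ)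
    (hL : 0 < Lsr ρ x₁ y₁ θ)
    (hcase : 0 < x₁ - ρ * Real.sin θ ∨ (y₁ + ρ * Real.cos θ) ≠ 0 ∨
      (x₁ - ρ * Real.sin θ < 0 ∧ ∀ᶠ t in 𝓝 θ, 0 ≤ y₁ + ρ * Real.cos t)) :
    HasDerivAt (Dsr ρ x₁ y₁) (ρ * Real.cos (φsr ρ x₁ y₁ θ - θ - π) - ρ) θ := by
  have hs0 : 0 < Real.sqrt (x₁^2+y₁^2)^2 - 2*ρ*(x₁*Real.sin θ - y₁*Real.cos θ) := by
    rw [Lsr, Real.sqrt_pos] at hL; exact hL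
  have hLpos : 0 < Lsr ρ x₁ y₁ θ := by rw [Lsr, Real.sqrt_pos]; exact hs0
  have hL2 : (Lsr ρ x₁ y₁ θ)^2
      = Real.sqrt (x₁^2+y₁^2)^2 - 2*ρ*(x₁*Real.sin θ - y₁*Real.cos θ) := by
    rw [Lsr]; exact Real.sq_sqrt hs0.le
  have hd2 : Real.sqrt (x₁^2+y₁^2)^2 = x₁^2 + y₁^2 := Real.sq_sqrt (by positivity)
  have hXY : (x₁ - ρ * Real.sin θ)^2 + (y₁ + ρ * Real.cos θ)^2
      = (Lsr ρ x₁ y₁ θ)^2 + ρ^2 := by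
    rw [hL2, hd2]
    nlinarith [Real.sin_sq_add_cos_sq θ]
  have hrpos : 0 < (x₁ - ρ * Real.sin θ)^2 + (y₁ + ρ * Real.cos θ)^2 := by
    rw [hXY]; positivity
  -- derivatives of components
  have hX : HasDerivAt (fun t => x₁ - ρ * Real.sin t) (-(ρ * Real.cos θ)) θ :=
    ((Real.hasDerivAt_sin θ).const_mul ρ).const_sub x₁
  have hY : HasDerivAt (fun t => y₁ + ρ * Real.cos t) (ρ * -Real.sin θ) θ :=
    ((Real.hasDerivAt_cos θ).const_mul ρ).const_add y₁
  have hA : HasDerivAt (fun t => atan2 (y₁ + ρ * Real.cos t) (x₁ - ρ * Real.sin t))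
      (((x₁ - ρ * Real.sin θ) * (ρ * -Real.sin θ)
          - (y₁ + ρ * Real.cos θ) * (-(ρ * Real.cos θ))) /
        ((x₁ - ρ * Real.sin θ)^2 + (y₁ + ρ * Real.cos θ)^2)) θ :=
    hasDerivAt_atan2 hX hY hcase
  have hInner : HasDerivAt
      (fun t => Real.sqrt (x₁^2+y₁^2)^2 - 2*ρ*(x₁*Real.sin t - y₁*Real.cos t))
      (-((2*ρ) * (x₁*Real.cos θ - y₁*(-Real.sin θ)))) θ := by
    have h1 : HasDerivAt (fun t => x₁*Real.sin t - y₁*Real.cos t)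
        (x₁*Real.cos θ - y₁*(-Real.sin θ)) θ :=
      ((Real.hasDerivAt_sin θ).const_mul x₁).sub ((Real.hasDerivAt_cos θ).const_mul y₁)
    have h2 := (h1.const_mul (2*ρ)).const_sub (Real.sqrt (x₁^2+y₁^2)^2)
    convert h2 using 2 <;> ring
  have hLd : HasDerivAt (Lsr ρ x₁ y₁)
      (1 / (2 * Lsr ρ x₁ y₁ θ) * -((2*ρ) * (x₁*Real.cos θ - y₁*(-Real.sin θ)))) θ := by
    have := (Real.hasDerivAt_sqrt hs0.ne').comp θ hInner
    exact this
  have harc : HasDerivAt (fun t => Real.arctan (ρ / Lsr ρ x₁ y₁ t))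
      (1 / (1 + (ρ / Lsr ρ x₁ y₁ θ)^2) *
        ((0 * Lsr ρ x₁ y₁ θ
            - ρ * (1 / (2 * Lsr ρ x₁ y₁ θ) * -((2*ρ) * (x₁*Real.cos θ - y₁*(-Real.sin θ)))))
          / (Lsr ρ x₁ y₁ θ)^2)) θ :=
    ((hasDerivAt_const θ ρ).div hLd hLpos.ne').arctan
  have hD : HasDerivAt (Dsr ρ x₁ y₁)
      (ρ * ((((x₁ - ρ * Real.sin θ) * (ρ * -Real.sin θ)
            - (y₁ + ρ * Real.cos θ) * (-(ρ * Real.cos θ))) /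
          ((x₁ - ρ * Real.sin θ)^2 + (y₁ + ρ * Real.cos θ)^2)
          + 1 / (1 + (ρ / Lsr ρ x₁ y₁ θ)^2) *
            ((0 * Lsr ρ x₁ y₁ θ
                - ρ * (1 / (2 * Lsr ρ x₁ y₁ θ) * -((2*ρ) * (x₁*Real.cos θ - y₁*(-Real.sin θ)))))
              / (Lsr ρ x₁ y₁ θ)^2) - 1 - 0)) + 1 / (2 * Lsr ρ x₁ y₁ θ) * -((2*ρ) * (x₁*Real.cos θ - y₁*(-Real.sin θ)))) θ := by
    have h1 := (((hA.add harc).sub (hasDerivAt_id θ)).sub_const π).const_mul ρ |>.add hLd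
    exact h1.congr_deriv (by ring)
  refine hD.congr_deriv ?_
  have hct := cos_tau (X := x₁ - ρ * Real.sin θ) (Y := y₁ + ρ * Real.cos θ)
    (L := Lsr ρ x₁ y₁ θ) (ρ := ρ) θ hrpos hLpos hXY
  rw [φsr, show atan2 (y₁ + ρ * Real.cos θ) (x₁ - ρ * Real.sin θ)
      + Real.arctan (ρ / Lsr ρ x₁ y₁ θ) - θ - π
      = atan2 (y₁ + ρ * Real.cos θ) (x₁ - ρ * Real.sin θ)
      + Real.arctan (ρ / Lsr ρ x₁ y₁ θ) - θ - π from rfl, hct]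
  have h1u : 1 + (ρ / Lsr ρ x₁ y₁ θ)^2
      = ((x₁ - ρ * Real.sin θ)^2 + (y₁ + ρ * Real.cos θ)^2) / (Lsr ρ x₁ y₁ θ)^2 := by
    rw [hXY]; field_simp
  rw [h1u, hXY]
  have hLne := hLpos.ne'
  have hden : (0:ℝ) < (Lsr ρ x₁ y₁ θ)^2 + ρ^2 := by positivity
  field_simp
  ring

lemma cos_tau2 {X Y L ρ : ℝ} (θ : ℝ) (hr : 0 < X^2 + Y^2) (hL : 0 < L)
    (hXY : X^2 + Y^2 = L^2 + ρ^2) :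
    Real.cos (θ - (atan2 Y X - Real.arctan (ρ / L)))
      = ((X * Real.cos θ + Y * Real.sin θ) * L + (Y * Real.cos θ - X * Real.sin θ) * ρ)
          / (X^2 + Y^2) := by
  have hrpos : 0 < Real.sqrt (X^2+Y^2) := Real.sqrt_pos.2 hr
  have hz : (⟨X, Y⟩ : ℂ) ≠ 0 := by
    intro h
    rw [Complex.ext_iff] at h
    simp only [Complex.zero_re, Complex.zero_im] at h
    nlinarith [h.1, h.2]
  have habs : ‖(⟨X, Y⟩ : ℂ)‖ = Real.sqrt (X^2+Y^2) := by
    rw [Complex.norm_def, Complex.normSq_mk]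
    ring_nf
  have hcosA : Real.cos (atan2 Y X) = X / Real.sqrt (X^2+Y^2) := by
    rw [atan2, Complex.cos_arg hz, habs]
  have hsinA : Real.sin (atan2 Y X) = Y / Real.sqrt (X^2+Y^2) := by
    rw [atan2, Complex.sin_arg, habs]
  have h1u : Real.sqrt (1 + (ρ/L)^2) = Real.sqrt (X^2+Y^2) / L := by
    have he : 1 + (ρ/L)^2 = (X^2+Y^2) / L^2 := by
      rw [hXY]; field_simp
    rw [he, Real.sqrt_div (by positivity), Real.sqrt_sq hL.le]
  have hcosu : Real.cos (Real.arctan (ρ/L)) = L / Real.sqrt (X^2+Y^2) := by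
    rw [Real.cos_arctan, h1u, one_div_div]
  have hsinu : Real.sin (Real.arctan (ρ/L)) = ρ / Real.sqrt (X^2+Y^2) := by
    rw [Real.sin_arctan, h1u]
    rw [div_div_div_cancel_right₀ hL.ne']
  rw [show θ - (atan2 Y X - Real.arctan (ρ/L)) = -((atan2 Y X - θ) - Real.arctan (ρ/L)) by ring]
  rw [Real.cos_neg, Real.cos_sub, Real.cos_sub, Real.sin_sub, hcosA, hsinA, hcosu, hsinu]
  have hs2 : Real.sqrt (X^2+Y^2) * Real.sqrt (X^2+Y^2) = X^2+Y^2 := Real.mul_self_sqrt hr.le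
  field_simp
  rw [Real.sq_sqrt hr.le]

lemma hasDerivAt_Drs {ρ d₂₃ θ : ℝ} (hρ : 0 < ρ) (hd23 : 2 * ρ ≤ d₂₃)
    (hL : 0 < Lrs ρ d₂₃ θ) :
    HasDerivAt (Drs ρ d₂₃) (ρ - ρ * Real.cos (θ - φrs ρ d₂₃ θ)) θ := by
  have hs0 : 0 < d₂₃^2 - 2*d₂₃*ρ*Real.sin θ := by
    rw [Lrs, Real.sqrt_pos] at hL; exact hL
  have hLpos : 0 < Lrs ρ d₂₃ θ := by rw [Lrs, Real.sqrt_pos]; exact hs0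
  have hL2 : (Lrs ρ d₂₃ θ)^2 = d₂₃^2 - 2*d₂₃*ρ*Real.sin θ := by
    rw [Lrs]; exact Real.sq_sqrt hs0.le
  have hXpos : 0 < d₂₃ - ρ * Real.sin θ := by
    have := Real.sin_le_one θ
    nlinarith
  have hXY : (d₂₃ - ρ * Real.sin θ)^2 + (ρ * Real.cos θ)^2 = (Lrs ρ d₂₃ θ)^2 + ρ^2 := by
    rw [hL2]
    nlinarith [Real.sin_sq_add_cos_sq θ]
  have hrpos : 0 < (d₂₃ - ρ * Real.sin θ)^2 + (ρ * Real.cos θ)^2 := by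
    rw [hXY]; positivity
  have hX : HasDerivAt (fun t => d₂₃ - ρ * Real.sin t) (-(ρ * Real.cos θ)) θ :=
    ((Real.hasDerivAt_sin θ).const_mul ρ).const_sub d₂₃
  have hY : HasDerivAt (fun t => ρ * Real.cos t) (ρ * -Real.sin θ) θ :=
    (Real.hasDerivAt_cos θ).const_mul ρ
  have hA : HasDerivAt (fun t => atan2 (ρ * Real.cos t) (d₂₃ - ρ * Real.sin t))
      (((d₂₃ - ρ * Real.sin θ) * (ρ * -Real.sin θ)
          - (ρ * Real.cos θ) * (-(ρ * Real.cos θ))) /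
        ((d₂₃ - ρ * Real.sin θ)^2 + (ρ * Real.cos θ)^2)) θ :=
    hasDerivAt_atan2 hX hY (Or.inl hXpos)
  have hInner : HasDerivAt (fun t => d₂₃^2 - 2*d₂₃*ρ*Real.sin t)
      (-(2*d₂₃*ρ*Real.cos θ)) θ := by
    have h2 := ((Real.hasDerivAt_sin θ).const_mul (2*d₂₃*ρ)).const_sub (d₂₃^2)
    convert h2 using 1
  have hLd : HasDerivAt (Lrs ρ d₂₃)
      (1 / (2 * Lrs ρ d₂₃ θ) * -(2*d₂₃*ρ*Real.cos θ)) θ := by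
    have := (Real.hasDerivAt_sqrt hs0.ne').comp θ hInner
    exact this
  have harc : HasDerivAt (fun t => Real.arctan (ρ / Lrs ρ d₂₃ t))
      (1 / (1 + (ρ / Lrs ρ d₂₃ θ)^2) *
        ((0 * Lrs ρ d₂₃ θ - ρ * (1 / (2 * Lrs ρ d₂₃ θ) * -(2*d₂₃*ρ*Real.cos θ)))
          / (Lrs ρ d₂₃ θ)^2)) θ :=
    ((hasDerivAt_const θ ρ).div hLd hLpos.ne').arctan
  have hD : HasDerivAt (Drs ρ d₂₃)
      (ρ * (1 - (((d₂₃ - ρ * Real.sin θ) * (ρ * -Real.sin θ)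
            - (ρ * Real.cos θ) * (-(ρ * Real.cos θ))) /
          ((d₂₃ - ρ * Real.sin θ)^2 + (ρ * Real.cos θ)^2)
          - 1 / (1 + (ρ / Lrs ρ d₂₃ θ)^2) *
            ((0 * Lrs ρ d₂₃ θ - ρ * (1 / (2 * Lrs ρ d₂₃ θ) * -(2*d₂₃*ρ*Real.cos θ)))
              / (Lrs ρ d₂₃ θ)^2)))
        + 1 / (2 * Lrs ρ d₂₃ θ) * -(2*d₂₃*ρ*Real.cos θ)) θ := by
    have h1 := (((hasDerivAt_id θ).sub (hA.sub harc)).const_mul ρ).add hLd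
    exact h1
  refine hD.congr_deriv ?_
  have hct := cos_tau2 (X := d₂₃ - ρ * Real.sin θ) (Y := ρ * Real.cos θ)
    (L := Lrs ρ d₂₃ θ) (ρ := ρ) θ hrpos hLpos hXY
  rw [φrs, hct]
  have h1u : 1 + (ρ / Lrs ρ d₂₃ θ)^2
      = ((d₂₃ - ρ * Real.sin θ)^2 + (ρ * Real.cos θ)^2) / (Lrs ρ d₂₃ θ)^2 := by
    rw [hXY]; field_simp
  rw [h1u, hXY]
  have hLne := hLpos.ne'
  have hden : (0:ℝ) < (Lrs ρ d₂₃ θ)^2 + ρ^2 := by positivity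
  field_simp
  ring

lemma sr_case {ρ x₁ y₁ a b : ℝ} (hρ : 0 < ρ)
    (hd12 : 2 * ρ ≤ Real.sqrt (x₁ ^ 2 + y₁ ^ 2)) {θ : ℝ} (hθ : θ ∈ Set.Ioo a b)
    (hL1 : ∀ t ∈ Set.Ioo a b, 0 < Lsr ρ x₁ y₁ t)
    (hτ1 : ∀ t ∈ Set.Ioo a b, φsr ρ x₁ y₁ t - t - π ∈ Set.Ioo 0 (2*π)) :
    0 < x₁ - ρ * Real.sin θ ∨ (y₁ + ρ * Real.cos θ) ≠ 0 ∨
      (x₁ - ρ * Real.sin θ < 0 ∧ ∀ᶠ t in 𝓝 θ, 0 ≤ y₁ + ρ * Real.cos t) := by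
  by_cases hY0 : (y₁ + ρ * Real.cos θ) ≠ 0
  · exact Or.inr (Or.inl hY0)
  push_neg at hY0
  by_cases hXpos : 0 < x₁ - ρ * Real.sin θ
  · exact Or.inl hXpos
  push_neg at hXpos
  have hd12sq : 4 * ρ^2 ≤ x₁^2 + y₁^2 := by
    nlinarith [Real.sq_sqrt (show (0:ℝ) ≤ x₁^2+y₁^2 by positivity)]
  have hXneg : x₁ - ρ * Real.sin θ < 0 := by
    rcases hXpos.lt_or_eq with h | h
    · exact h
    · exfalso
      have hx : x₁ = ρ * Real.sin θ := by linarith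
      have hy : y₁ = -(ρ * Real.cos θ) := by linarith
      rw [hx, hy] at hd12sq
      nlinarith [Real.sin_sq_add_cos_sq θ, mul_pos hρ hρ]
  by_cases hc1 : Real.cos θ = -1
  · refine Or.inr (Or.inr ⟨hXneg, Eventually.of_forall fun t => ?_⟩)
    have hy : y₁ = ρ := by rw [hc1] at hY0; linarith
    have := Real.neg_one_le_cos t
    nlinarith
  -- contradiction case
  exfalso
  obtain ⟨l, hlne, hl, hcos⟩ : ∃ l : Filter ℝ, l.NeBot ∧ l ≤ 𝓝 θ ∧
      ∀ᶠ t in l, Real.cos t < Real.cos θ := by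
    rcases lt_trichotomy (Real.sin θ) 0 with hs | hs | hs
    · refine ⟨𝓝[<] θ, inferInstance, nhdsWithin_le_nhds, ?_⟩
      have hc : ContinuousAt (fun t => Real.sin ((t + θ)/2)) θ := by fun_prop
      have h1 : ∀ᶠ t in 𝓝[<] θ, Real.sin ((t + θ)/2) < 0 := by
        apply eventually_nhdsWithin_of_eventually_nhds
        have : Real.sin ((θ + θ)/2) < 0 := by rw [add_self_div_two]; exact hs
        exact hc.preimage_mem_nhds (Iio_mem_nhds this)
      have h2 : ∀ᶠ t in 𝓝[<] θ, Real.sin ((t - θ)/2) < 0 := by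
        filter_upwards [Ioo_mem_nhdsLT_of_mem (Set.mem_Ioc.2 ⟨show θ - π < θ by linarith [Real.pi_pos], le_refl θ⟩)] with t ht
        exact Real.sin_neg_of_neg_of_neg_pi_lt (by simp at ht; linarith [ht.2]) (by simp at ht; linarith [ht.1, Real.pi_pos])
      filter_upwards [h1, h2] with t h1 h2
      nlinarith [Real.cos_sub_cos t θ]
    · -- sin θ = 0, cos θ = 1
      have hc2 : Real.cos θ = 1 := by
        have hfac : (Real.cos θ - 1) * (Real.cos θ + 1) = 0 := by
          nlinarith [Real.sin_sq_add_cos_sq θ]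
        rcases mul_eq_zero.1 hfac with h | h
        · linarith
        · exact absurd (by linarith : Real.cos θ = -1) hc1
      refine ⟨𝓝[>] θ, inferInstance, nhdsWithin_le_nhds, ?_⟩
      filter_upwards [Ioo_mem_nhdsGT_of_mem (Set.mem_Ico.2 ⟨le_refl θ, show θ < θ + 2*π by linarith [Real.pi_pos]⟩)] with t ht
      have h1 : Real.sin ((t + θ)/2) = Real.sin ((t - θ)/2) := by
        rw [show (t + θ)/2 = θ + (t - θ)/2 by ring, Real.sin_add, hs, hc2]
        ring
      have h2 : 0 < Real.sin ((t - θ)/2) := by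
        simp only [Set.mem_Ioo] at ht
        exact Real.sin_pos_of_pos_of_lt_pi (by linarith [ht.1]) (by linarith [ht.2])
      nlinarith [Real.cos_sub_cos t θ]
    · refine ⟨𝓝[>] θ, inferInstance, nhdsWithin_le_nhds, ?_⟩
      have hc : ContinuousAt (fun t => Real.sin ((t + θ)/2)) θ := by fun_prop
      have h1 : ∀ᶠ t in 𝓝[>] θ, 0 < Real.sin ((t + θ)/2) := by
        apply eventually_nhdsWithin_of_eventually_nhds
        have : 0 < Real.sin ((θ + θ)/2) := by rw [add_self_div_two]; exact hs
        exact hc.preimage_mem_nhds (Ioi_mem_nhds this)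
      have h2 : ∀ᶠ t in 𝓝[>] θ, 0 < Real.sin ((t - θ)/2) := by
        filter_upwards [Ioo_mem_nhdsGT_of_mem (Set.mem_Ico.2 ⟨le_refl θ, show θ < θ + π by linarith [Real.pi_pos]⟩)] with t ht
        simp only [Set.mem_Ioo] at ht
        exact Real.sin_pos_of_pos_of_lt_pi (by linarith [ht.1]) (by linarith [ht.2])
      filter_upwards [h1, h2] with t h1 h2
      nlinarith [Real.cos_sub_cos t θ]
  haveI := hlne
  have him : ∀ᶠ t in l, y₁ + ρ * Real.cos t < 0 := by
    filter_upwards [hcos] with t ht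
    have he : y₁ + ρ * Real.cos t = ρ * (Real.cos t - Real.cos θ) + (y₁ + ρ * Real.cos θ) := by
      ring
    rw [he, hY0, add_zero]
    exact mul_neg_of_pos_of_neg hρ (by linarith)
  have hzc : Tendsto (fun t => (⟨x₁ - ρ * Real.sin t, y₁ + ρ * Real.cos t⟩ : ℂ)) l
      (𝓝 (⟨x₁ - ρ * Real.sin θ, 0⟩ : ℂ)) := by
    apply Tendsto.mono_left ?_ hl
    have hcont : Continuous (fun t : ℝ => (⟨x₁ - ρ * Real.sin t, y₁ + ρ * Real.cos t⟩ : ℂ)) := by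
      have : (fun t : ℝ => (⟨x₁ - ρ * Real.sin t, y₁ + ρ * Real.cos t⟩ : ℂ))
          = fun t : ℝ => ((x₁ - ρ * Real.sin t : ℝ) : ℂ) + ((y₁ + ρ * Real.cos t : ℝ) : ℂ) * Complex.I := by
        funext t
        rw [Complex.mk_eq_add_mul_I]
      rw [this]
      fun_prop
    have h0 := hcont.continuousAt (x := θ)
    rw [ContinuousAt, hY0] at h0
    exact h0
  have htl : Tendsto (fun t => (⟨x₁ - ρ * Real.sin t, y₁ + ρ * Real.cos t⟩ : ℂ)) l
      (𝓝[{z : ℂ | z.im < 0}] (⟨x₁ - ρ * Real.sin θ, 0⟩ : ℂ)) := by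
    rw [tendsto_nhdsWithin_iff]
    exact ⟨hzc, him⟩
  have harg : Tendsto (fun t => atan2 (y₁ + ρ * Real.cos t) (x₁ - ρ * Real.sin t)) l (𝓝 (-π)) :=
    (Complex.tendsto_arg_nhdsWithin_im_neg_of_re_neg_of_im_zero
      (z := (⟨x₁ - ρ * Real.sin θ, 0⟩ : ℂ)) hXneg rfl).comp htl
  have hLcont : Continuous (Lsr ρ x₁ y₁) := by
    apply Real.continuous_sqrt.comp
    fun_prop
  have hLc : ContinuousAt (fun t => Real.arctan (ρ / Lsr ρ x₁ y₁ t)) θ :=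
    Real.continuous_arctan.continuousAt.comp
      (continuousAt_const.div hLcont.continuousAt (hL1 θ hθ).ne')
  have hrest : Tendsto (fun t => Real.arctan (ρ / Lsr ρ x₁ y₁ t) - t - π) l
      (𝓝 (Real.arctan (ρ / Lsr ρ x₁ y₁ θ) - θ - π)) :=
    Tendsto.mono_left ((hLc.sub continuousAt_id).sub continuousAt_const) hl
  have htau : Tendsto (fun t => φsr ρ x₁ y₁ t - t - π) l
      (𝓝 (-π + (Real.arctan (ρ / Lsr ρ x₁ y₁ θ) - θ - π))) := by
    refine (harg.add hrest).congr (fun t => ?_)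
    rw [φsr]; ring
  have hIoo : ∀ᶠ t in l, t ∈ Set.Ioo a b := hl (Ioo_mem_nhds hθ.1 hθ.2)
  have hge : 0 ≤ -π + (Real.arctan (ρ / Lsr ρ x₁ y₁ θ) - θ - π) :=
    ge_of_tendsto htau (by filter_upwards [hIoo] with t ht using (hτ1 t ht).1.le)
  have hargθ : atan2 (y₁ + ρ * Real.cos θ) (x₁ - ρ * Real.sin θ) = π := by
    rw [hY0, atan2]
    exact Complex.arg_eq_pi_iff.2 ⟨hXneg, rfl⟩
  have hub := (hτ1 θ hθ).2
  rw [φsr, hargθ] at hub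
  linarith

lemma cos_inj_tau {u v : ℝ} (hu : u ∈ Set.Ioo 0 (2*π)) (hv : v ∈ Set.Ioo 0 (2*π))
    (hc : Real.cos u = Real.cos v) (hs : u + v ≠ 2*π) : u = v := by
  have h2pi : Real.cos (2*π - u) = Real.cos u := Real.cos_two_pi_sub u
  have h2pi' : Real.cos (2*π - v) = Real.cos v := Real.cos_two_pi_sub v
  rcases le_or_gt u π with h1 | h1 <;> rcases le_or_gt v π with h2 | h2
  · exact Real.injOn_cos ⟨hu.1.le, h1⟩ ⟨hv.1.le, h2⟩ hc
  · exfalso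
    apply hs
    have hc' : Real.cos u = Real.cos (2*π - v) := by rw [h2pi']; exact hc
    have heq : u = 2*π - v :=
      Real.injOn_cos ⟨hu.1.le, h1⟩ ⟨by linarith [hv.2], by linarith⟩ hc'
    linarith
  · exfalso
    apply hs
    have hc' : Real.cos (2*π - u) = Real.cos v := by rw [h2pi]; exact hc
    have heq : 2*π - u = v :=
      Real.injOn_cos ⟨by linarith [hu.2], by linarith⟩ ⟨hv.1.le, h2⟩ hc'
    linarith
  · have hc' : Real.cos (2*π - u) = Real.cos (2*π - v) := by rw [h2pi, h2pi']; exact hc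
    have heq : 2*π - u = 2*π - v :=
      Real.injOn_cos ⟨by linarith [hu.2], by linarith⟩ ⟨by linarith [hv.2], by linarith⟩ hc'
    linarith

/- STATEMENT 9: with τ₁(θ) = φ₁(θ) − θ − π and τ₂(θ) = θ − φ₂(θ), on any open
interval where L₁ > 0, L₂ > 0, τ₁ ∈ (0, 2π) and τ₂ ∈ (0, 2π), the total length
G = D₁ + D₂ is differentiable with G′(θ) = ρ(cos τ₁(θ) − cos τ₂(θ)); and if θ in
the interval satisfies G′(θ) = 0 and τ₁(θ) + τ₂(θ) ≠ 2π, then τ₁(θ) = τ₂(θ). -/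
theorem stmt9 (ρ x₁ y₁ d₂₃ a b : ℝ) (hρ : 0 < ρ)
    (hd12 : 2 * ρ ≤ Real.sqrt (x₁ ^ 2 + y₁ ^ 2)) (hd23 : 2 * ρ ≤ d₂₃)
    (hL1 : ∀ θ ∈ Set.Ioo a b, 0 < Lsr ρ x₁ y₁ θ)
    (hL2 : ∀ θ ∈ Set.Ioo a b, 0 < Lrs ρ d₂₃ θ)
    (hτ1 : ∀ θ ∈ Set.Ioo a b, φsr ρ x₁ y₁ θ - θ - Real.pi ∈ Set.Ioo 0 (2 * Real.pi))
    (hτ2 : ∀ θ ∈ Set.Ioo a b, θ - φrs ρ d₂₃ θ ∈ Set.Ioo 0 (2 * Real.pi)) :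
    (∀ θ ∈ Set.Ioo a b,
      HasDerivAt (Gsrs ρ x₁ y₁ d₂₃)
        (ρ * (Real.cos (φsr ρ x₁ y₁ θ - θ - Real.pi) - Real.cos (θ - φrs ρ d₂₃ θ))) θ)
    ∧ ∀ θ ∈ Set.Ioo a b,
        deriv (Gsrs ρ x₁ y₁ d₂₃) θ = 0 →
        (φsr ρ x₁ y₁ θ - θ - Real.pi) + (θ - φrs ρ d₂₃ θ) ≠ 2 * Real.pi →
        φsr ρ x₁ y₁ θ - θ - Real.pi = θ - φrs ρ d₂₃ θ := by

  have hmain : ∀ θ ∈ Set.Ioo a b,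
      HasDerivAt (Gsrs ρ x₁ y₁ d₂₃)
        (ρ * (Real.cos (φsr ρ x₁ y₁ θ - θ - Real.pi) - Real.cos (θ - φrs ρ d₂₃ θ))) θ := by
    intro θ hθ
    have h1 := hasDerivAt_Dsr hρ (hL1 θ hθ) (sr_case hρ hd12 hθ hL1 hτ1)
    have h2 := hasDerivAt_Drs hρ hd23 (hL2 θ hθ)
    have h3 : HasDerivAt (Gsrs ρ x₁ y₁ d₂₃)
        ((ρ * Real.cos (φsr ρ x₁ y₁ θ - θ - π) - ρ)
          + (ρ - ρ * Real.cos (θ - φrs ρ d₂₃ θ))) θ := by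
      exact h1.add h2
    exact h3.congr_deriv (by ring)
  refine ⟨hmain, ?_⟩
  intro θ hθ hd hne
  have hder := (hmain θ hθ).deriv
  rw [hd] at hder
  have hcos : Real.cos (φsr ρ x₁ y₁ θ - θ - π) = Real.cos (θ - φrs ρ d₂₃ θ) := by
    have := hder.symm
    rcases mul_eq_zero.1 this with h | h
    · exact absurd h hρ.ne'
    · linarith
  exact cos_inj_tau (hτ1 θ hθ) (hτ2 θ hθ) hcos hne
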